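/- arXiv:2603.06678 — 2 statements merged into one kernel-verified Lean document; each statement's English description precedes it below -/
import Mathlib

section
/- The Maximum Entropy Star redundancy satisfies Additivity: for two independent subsystems (X_1, X_2, Y) ⊥ (X_1', X_2', Y'), the maximum entropy distribution over the combined system with pairwise constraints factorizes, and consequently I_cap^MES((X_1,X_1'), (X_2,X_2'); (Y,Y')) = I_cap^MES(X_1, X_2; Y) + I_cap^MES(X_1', X_2'; Y'). -/
/-- Shannon entropy of a distribution `q` on a finite type (natural logarithm). -/
noncomputable def entD {α : Type} [Fintype α] (q : α → ℝ) : ℝ :=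
  ∑ x, -(q x * Real.log (q x))

/-- Marginal distribution of the first two coordinates. -/
def mAB {A B C : Type} [Fintype C] (q : A × B × C → ℝ) : A × B → ℝ :=
  fun x => ∑ c, q (x.1, x.2, c)

/-- Marginal distribution of the first and third coordinates. -/
def mAC {A B C : Type} [Fintype B] (q : A × B × C → ℝ) : A × C → ℝ :=
  fun x => ∑ b, q (x.1, b, x.2)

/-- Marginal distribution of the second and third coordinates. -/
def mBC {A B C : Type} [Fintype A] (q : A × B × C → ℝ) : B × C → ℝ :=
  fun x => ∑ a, q (a, x.1, x.2)

/-- Marginal distribution of the first coordinate. -/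
def mA {A B C : Type} [Fintype B] [Fintype C] (q : A × B × C → ℝ) : A → ℝ :=
  fun a => ∑ b, ∑ c, q (a, b, c)

/-- Marginal distribution of the second coordinate. -/
def mB {A B C : Type} [Fintype A] [Fintype C] (q : A × B × C → ℝ) : B → ℝ :=
  fun b => ∑ a, ∑ c, q (a, b, c)

/-- Marginal distribution of the third coordinate (the target). -/
def mC {A B C : Type} [Fintype A] [Fintype B] (q : A × B × C → ℝ) : C → ℝ :=
  fun c => ∑ a, ∑ b, q (a, b, c)

/-- The distribution making `X₁` and `X₂` conditionally independent given `Y`,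
`q(x₁,x₂,y) = p(x₁,y) p(x₂,y) / p(y)`: the maximum entropy distribution subject to the
pairwise source-target marginal constraints. -/
noncomputable def Qstar {A B C : Type} [Fintype A] [Fintype B]
    (p : A × B × C → ℝ) : A × B × C → ℝ :=
  fun x => mAC p (x.1, x.2.2) * mBC p (x.2.1, x.2.2) / mC p x.2.2

/-- Mutual information between the two sources `I(X₁;X₂)` under `q`. -/
noncomputable def miAB {A B C : Type} [Fintype A] [Fintype B] [Fintype C]
    (q : A × B × C → ℝ) : ℝ :=
  entD (mA q) + entD (mB q) - entD (mAB q)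

/-- Mutual information `I(X₁;Y)` under `q`. -/
noncomputable def miAC {A B C : Type} [Fintype A] [Fintype B] [Fintype C]
    (q : A × B × C → ℝ) : ℝ :=
  entD (mA q) + entD (mC q) - entD (mAC q)

/-- Mutual information `I(X₂;Y)` under `q`. -/
noncomputable def miBC {A B C : Type} [Fintype A] [Fintype B] [Fintype C]
    (q : A × B × C → ℝ) : ℝ :=
  entD (mB q) + entD (mC q) - entD (mBC q)

/-- Conditional mutual information `I(X₁;X₂|Y)` under `q`. -/
noncomputable def cmiABgC {A B C : Type} [Fintype A] [Fintype B] [Fintype C]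
    (q : A × B × C → ℝ) : ℝ :=
  entD (mAC q) + entD (mBC q) - entD (mC q) - entD q

/-- Conditional mutual information `I(X₁;Y|X₂)` under `q`. -/
noncomputable def cmiACgB {A B C : Type} [Fintype A] [Fintype B] [Fintype C]
    (q : A × B × C → ℝ) : ℝ :=
  entD (mAB q) + entD (mBC q) - entD (mB q) - entD q

/-- Coinformation `I(X₁;X₂;Y) = I(X₁;X₂) − I(X₁;X₂|Y)` under `q`. -/
noncomputable def coI {A B C : Type} [Fintype A] [Fintype B] [Fintype C]
    (q : A × B × C → ℝ) : ℝ :=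
  miAB q - cmiABgC q

/-- The product (independent combination) of two tri-variate systems, with combined
sources `S₁ = (X₁,X₁')`, `S₂ = (X₂,X₂')` and combined target `T = (Y,Y')`. -/
def prodSys {A B C A' B' C' : Type}
    (p : A × B × C → ℝ) (p' : A' × B' × C' → ℝ) :
    (A × A') × (B × B') × (C × C') → ℝ :=
  fun x => p (x.1.1, x.2.1.1, x.2.2.1) * p' (x.1.2, x.2.1.2, x.2.2.2)

section AuxMES

/-- Pointwise identity for splitting `-(ab) log(ab)` for nonnegative reals. -/
lemma neg_mul_log_mul (a b : ℝ) (ha : 0 ≤ a) (hb : 0 ≤ b) :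
    -(a * b * Real.log (a * b)) = -(a * Real.log a) * b + a * -(b * Real.log b) := by
  rcases ha.eq_or_lt with h | h
  · simp [← h]
  rcases hb.eq_or_lt with h' | h'
  · simp [← h']
  rw [Real.log_mul h.ne' h'.ne']; ring

lemma entD_comp_equiv {α β : Type} [Fintype α] [Fintype β] (e : α ≃ β) (q : β → ℝ) :
    entD (fun x => q (e x)) = entD q :=
  e.sum_comp fun b => -(q b * Real.log (q b))

lemma entD_prod {α β : Type} [Fintype α] [Fintype β] (u : α → ℝ) (v : β → ℝ)
    (hu : ∀ x, 0 ≤ u x) (hv : ∀ y, 0 ≤ v y)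
    (hus : ∑ x, u x = 1) (hvs : ∑ y, v y = 1) :
    entD (fun x : α × β => u x.1 * v x.2) = entD u + entD v := by
  unfold entD
  rw [Fintype.sum_prod_type]
  calc ∑ x, ∑ y, -(u x * v y * Real.log (u x * v y))
      = ∑ x, ∑ y, (-(u x * Real.log (u x)) * v y + u x * -(v y * Real.log (v y))) :=
        Finset.sum_congr rfl fun x _ => Finset.sum_congr rfl fun y _ =>
          neg_mul_log_mul _ _ (hu x) (hv y)
    _ = ∑ x, (-(u x * Real.log (u x) * ∑ y, v y)
          + u x * (∑ y, -(v y * Real.log (v y)))) := by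
        refine Finset.sum_congr rfl fun x _ => ?_
        rw [Finset.sum_add_distrib, ← Finset.mul_sum, ← Finset.mul_sum, neg_mul]
    _ = (∑ x, -(u x * Real.log (u x))) + (∑ y, -(v y * Real.log (v y))) := by
        simp_rw [hvs, mul_one]
        rw [Finset.sum_add_distrib, ← Finset.sum_mul, hus, one_mul]

/-- Shuffle equivalence for pairs of pairs. -/
def ePair (α α' β β' : Type) : ((α × α') × (β × β')) ≃ ((α × β) × (α' × β')) where
  toFun x := ((x.1.1, x.2.1), (x.1.2, x.2.2))
  invFun y := ((y.1.1, y.2.1), (y.1.2, y.2.2))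
  left_inv _ := rfl
  right_inv _ := rfl

/-- Shuffle equivalence for the full product system. -/
def eTriple (A B C A' B' C' : Type) :
    ((A × A') × (B × B') × (C × C')) ≃ ((A × B × C) × (A' × B' × C')) where
  toFun x := ((x.1.1, x.2.1.1, x.2.2.1), (x.1.2, x.2.1.2, x.2.2.2))
  invFun y := ((y.1.1, y.2.1), (y.1.2.1, y.2.2.1), (y.1.2.2, y.2.2.2))
  left_inv _ := rfl
  right_inv _ := rfl

lemma entD_prod' {α α' β β' : Type} [Fintype α] [Fintype α'] [Fintype β] [Fintype β']
    (u : α × β → ℝ) (v : α' × β' → ℝ) (hu : ∀ x, 0 ≤ u x) (hv : ∀ y, 0 ≤ v y)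
    (hus : ∑ x, u x = 1) (hvs : ∑ y, v y = 1) :
    entD (fun x : (α × α') × (β × β') => u (x.1.1, x.2.1) * v (x.1.2, x.2.2))
      = entD u + entD v := by
  have h := entD_comp_equiv (ePair α α' β β') (fun y => u y.1 * v y.2)
  rw [← entD_prod u v hu hv hus hvs]
  exact h

lemma entD_prodSys {A B C A' B' C' : Type} [Fintype A] [Fintype B] [Fintype C]
    [Fintype A'] [Fintype B'] [Fintype C']
    (q : A × B × C → ℝ) (q' : A' × B' × C' → ℝ)
    (hq : ∀ x, 0 ≤ q x) (hq' : ∀ x, 0 ≤ q' x)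
    (h1 : ∑ x, q x = 1) (h1' : ∑ x, q' x = 1) :
    entD (prodSys q q') = entD q + entD q' := by
  have h := entD_comp_equiv (eTriple A B C A' B' C') (fun y => q y.1 * q' y.2)
  rw [← entD_prod q q' hq hq' h1 h1']
  exact h

lemma sum_prod_mul {γ δ : Type} [Fintype γ] [Fintype δ] (f : γ → ℝ) (g : δ → ℝ) :
    ∑ c : γ × δ, f c.1 * g c.2 = (∑ c, f c) * (∑ c, g c) := by
  rw [Fintype.sum_prod_type]
  simp_rw [← Finset.mul_sum]
  rw [← Finset.sum_mul]

variable {A B C A' B' C' : Type} [Fintype A] [Fintype B] [Fintype C]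
    [Fintype A'] [Fintype B'] [Fintype C']

lemma mAB_prod (q : A × B × C → ℝ) (q' : A' × B' × C' → ℝ) :
    mAB (prodSys q q')
      = fun x : (A × A') × (B × B') => mAB q (x.1.1, x.2.1) * mAB q' (x.1.2, x.2.2) := by
  funext x
  exact sum_prod_mul (fun c => q (x.1.1, x.2.1, c)) (fun c => q' (x.1.2, x.2.2, c))

lemma mAC_prod (q : A × B × C → ℝ) (q' : A' × B' × C' → ℝ) :
    mAC (prodSys q q')
      = fun x : (A × A') × (C × C') => mAC q (x.1.1, x.2.1) * mAC q' (x.1.2, x.2.2) := by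
  funext x
  exact sum_prod_mul (fun b => q (x.1.1, b, x.2.1)) (fun b => q' (x.1.2, b, x.2.2))

lemma mBC_prod (q : A × B × C → ℝ) (q' : A' × B' × C' → ℝ) :
    mBC (prodSys q q')
      = fun x : (B × B') × (C × C') => mBC q (x.1.1, x.2.1) * mBC q' (x.1.2, x.2.2) := by
  funext x
  exact sum_prod_mul (fun a => q (a, x.1.1, x.2.1)) (fun a => q' (a, x.1.2, x.2.2))

lemma mA_prod (q : A × B × C → ℝ) (q' : A' × B' × C' → ℝ) :
    mA (prodSys q q') = fun a : A × A' => mA q a.1 * mA q' a.2 := by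
  funext a
  show ∑ b : B × B', ∑ c : C × C', q (a.1, b.1, c.1) * q' (a.2, b.2, c.2) = _
  have h1 : ∀ b : B × B', (∑ c : C × C', q (a.1, b.1, c.1) * q' (a.2, b.2, c.2))
      = (∑ c, q (a.1, b.1, c)) * (∑ c, q' (a.2, b.2, c)) := fun b =>
    sum_prod_mul (fun c => q (a.1, b.1, c)) (fun c => q' (a.2, b.2, c))
  simp_rw [h1]
  exact sum_prod_mul (fun b => ∑ c, q (a.1, b, c)) (fun b => ∑ c, q' (a.2, b, c))

lemma mB_prod (q : A × B × C → ℝ) (q' : A' × B' × C' → ℝ) :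
    mB (prodSys q q') = fun b : B × B' => mB q b.1 * mB q' b.2 := by
  funext b
  show ∑ a : A × A', ∑ c : C × C', q (a.1, b.1, c.1) * q' (a.2, b.2, c.2) = _
  have h1 : ∀ a : A × A', (∑ c : C × C', q (a.1, b.1, c.1) * q' (a.2, b.2, c.2))
      = (∑ c, q (a.1, b.1, c)) * (∑ c, q' (a.2, b.2, c)) := fun a =>
    sum_prod_mul (fun c => q (a.1, b.1, c)) (fun c => q' (a.2, b.2, c))
  simp_rw [h1]
  exact sum_prod_mul (fun a => ∑ c, q (a, b.1, c)) (fun a => ∑ c, q' (a, b.2, c))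

lemma mC_prod (q : A × B × C → ℝ) (q' : A' × B' × C' → ℝ) :
    mC (prodSys q q') = fun c : C × C' => mC q c.1 * mC q' c.2 := by
  funext c
  show ∑ a : A × A', ∑ b : B × B', q (a.1, b.1, c.1) * q' (a.2, b.2, c.2) = _
  have h1 : ∀ a : A × A', (∑ b : B × B', q (a.1, b.1, c.1) * q' (a.2, b.2, c.2))
      = (∑ b, q (a.1, b, c.1)) * (∑ b, q' (a.2, b, c.2)) := fun a =>
    sum_prod_mul (fun b => q (a.1, b, c.1)) (fun b => q' (a.2, b, c.2))
  simp_rw [h1]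
  exact sum_prod_mul (fun a => ∑ b, q (a, b, c.1)) (fun a => ∑ b, q' (a, b, c.2))

lemma sum_mA (q : A × B × C → ℝ) : ∑ a, mA q a = ∑ x, q x := by
  unfold mA
  rw [Fintype.sum_prod_type]
  refine Finset.sum_congr rfl fun a _ => ?_
  rw [Fintype.sum_prod_type]

lemma sum_mB (q : A × B × C → ℝ) : ∑ b, mB q b = ∑ x, q x := by
  unfold mB
  rw [Finset.sum_comm, Fintype.sum_prod_type]
  refine Finset.sum_congr rfl fun a _ => ?_
  rw [Fintype.sum_prod_type]

lemma sum_mC (q : A × B × C → ℝ) : ∑ c, mC q c = ∑ x, q x := by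
  unfold mC
  rw [Finset.sum_comm, Fintype.sum_prod_type]
  refine Finset.sum_congr rfl fun a _ => ?_
  rw [Finset.sum_comm, Fintype.sum_prod_type]

lemma sum_mAB (q : A × B × C → ℝ) : ∑ x, mAB q x = ∑ x, q x := by
  unfold mAB
  rw [Fintype.sum_prod_type, Fintype.sum_prod_type]
  refine Finset.sum_congr rfl fun a _ => ?_
  rw [Fintype.sum_prod_type]

lemma sum_mAC (q : A × B × C → ℝ) : ∑ x, mAC q x = ∑ x, q x := by
  unfold mAC
  rw [Fintype.sum_prod_type, Fintype.sum_prod_type]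
  refine Finset.sum_congr rfl fun a _ => ?_
  rw [Finset.sum_comm, Fintype.sum_prod_type]

lemma sum_mBC (q : A × B × C → ℝ) : ∑ x, mBC q x = ∑ x, q x := by
  unfold mBC
  rw [Finset.sum_comm, Fintype.sum_prod_type]

/-- Coinformation is additive over independent products. -/
lemma coI_prod (q : A × B × C → ℝ) (q' : A' × B' × C' → ℝ)
    (hq : ∀ x, 0 ≤ q x) (hq' : ∀ x, 0 ≤ q' x)
    (h1 : ∑ x, q x = 1) (h1' : ∑ x, q' x = 1) :
    coI (prodSys q q') = coI q + coI q' := by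
  have nn2 : ∀ {γ : Type} [Fintype γ] (f : γ → A × B × C → ℝ), True := fun _ => trivial
  have hA : ∀ a, 0 ≤ mA q a := fun a =>
    Finset.sum_nonneg fun _ _ => Finset.sum_nonneg fun _ _ => hq _
  have hA' : ∀ a, 0 ≤ mA q' a := fun a =>
    Finset.sum_nonneg fun _ _ => Finset.sum_nonneg fun _ _ => hq' _
  have hB : ∀ b, 0 ≤ mB q b := fun b =>
    Finset.sum_nonneg fun _ _ => Finset.sum_nonneg fun _ _ => hq _
  have hB' : ∀ b, 0 ≤ mB q' b := fun b =>
    Finset.sum_nonneg fun _ _ => Finset.sum_nonneg fun _ _ => hq' _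
  have hC : ∀ c, 0 ≤ mC q c := fun c =>
    Finset.sum_nonneg fun _ _ => Finset.sum_nonneg fun _ _ => hq _
  have hC' : ∀ c, 0 ≤ mC q' c := fun c =>
    Finset.sum_nonneg fun _ _ => Finset.sum_nonneg fun _ _ => hq' _
  have eA : entD (mA (prodSys q q')) = entD (mA q) + entD (mA q') := by
    rw [mA_prod]
    exact entD_prod _ _ hA hA' (by rw [sum_mA, h1]) (by rw [sum_mA, h1'])
  have eB : entD (mB (prodSys q q')) = entD (mB q) + entD (mB q') := by
    rw [mB_prod]
    exact entD_prod _ _ hB hB' (by rw [sum_mB, h1]) (by rw [sum_mB, h1'])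
  have eC : entD (mC (prodSys q q')) = entD (mC q) + entD (mC q') := by
    rw [mC_prod]
    exact entD_prod _ _ hC hC' (by rw [sum_mC, h1]) (by rw [sum_mC, h1'])
  have eAB : entD (mAB (prodSys q q')) = entD (mAB q) + entD (mAB q') := by
    rw [mAB_prod]
    exact entD_prod' _ _ (fun _ => Finset.sum_nonneg fun _ _ => hq _)
      (fun _ => Finset.sum_nonneg fun _ _ => hq' _)
      (by rw [sum_mAB, h1]) (by rw [sum_mAB, h1'])
  have eAC : entD (mAC (prodSys q q')) = entD (mAC q) + entD (mAC q') := by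
    rw [mAC_prod]
    exact entD_prod' _ _ (fun _ => Finset.sum_nonneg fun _ _ => hq _)
      (fun _ => Finset.sum_nonneg fun _ _ => hq' _)
      (by rw [sum_mAC, h1]) (by rw [sum_mAC, h1'])
  have eBC : entD (mBC (prodSys q q')) = entD (mBC q) + entD (mBC q') := by
    rw [mBC_prod]
    exact entD_prod' _ _ (fun _ => Finset.sum_nonneg fun _ _ => hq _)
      (fun _ => Finset.sum_nonneg fun _ _ => hq' _)
      (by rw [sum_mBC, h1]) (by rw [sum_mBC, h1'])
  have eF : entD (prodSys q q') = entD q + entD q' := entD_prodSys q q' hq hq' h1 h1'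
  unfold coI miAB cmiABgC
  rw [eA, eB, eC, eAB, eAC, eBC, eF]
  ring

lemma Qstar_nonneg (p : A × B × C → ℝ) (hpos : ∀ x, 0 < p x) :
    ∀ x, 0 ≤ Qstar p x := fun x =>
  div_nonneg
    (mul_nonneg (Finset.sum_nonneg fun _ _ => (hpos _).le)
      (Finset.sum_nonneg fun _ _ => (hpos _).le))
    (Finset.sum_nonneg fun _ _ => Finset.sum_nonneg fun _ _ => (hpos _).le)

lemma mC_pos (p : A × B × C → ℝ) [Nonempty A] [Nonempty B] (hpos : ∀ x, 0 < p x) :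
    ∀ c, 0 < mC p c := fun c =>
  Finset.sum_pos (fun _ _ => Finset.sum_pos (fun _ _ => hpos _) Finset.univ_nonempty)
    Finset.univ_nonempty

lemma sum_Qstar (p : A × B × C → ℝ) (hpos : ∀ x, 0 < p x) (hsum : ∑ x, p x = 1) :
    ∑ x, Qstar p x = 1 := by
  obtain ⟨⟨a0, b0, c0⟩⟩ : Nonempty (A × B × C) := by
    by_contra h
    rw [not_nonempty_iff] at h
    rw [Finset.univ_eq_empty, Finset.sum_empty] at hsum
    exact one_ne_zero hsum.symm
  haveI : Nonempty A := ⟨a0⟩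
  haveI : Nonempty B := ⟨b0⟩
  have hmC := mC_pos p hpos
  have hBfib : ∀ c, ∑ b, mBC p (b, c) = mC p c := fun c => Finset.sum_comm
  calc ∑ x, Qstar p x
      = ∑ a, ∑ b, ∑ c, mAC p (a, c) * mBC p (b, c) / mC p c := by
        rw [Fintype.sum_prod_type]
        refine Finset.sum_congr rfl fun a _ => ?_
        rw [Fintype.sum_prod_type]
        rfl
    _ = ∑ c, ∑ a, ∑ b, mAC p (a, c) * mBC p (b, c) / mC p c := by
        have h : ∀ a : A, (∑ b, ∑ c, mAC p (a, c) * mBC p (b, c) / mC p c)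
            = ∑ c, ∑ b, mAC p (a, c) * mBC p (b, c) / mC p c := fun a =>
          Finset.sum_comm
        simp_rw [h]
        exact Finset.sum_comm
    _ = ∑ c, mC p c := by
        refine Finset.sum_congr rfl fun c _ => ?_
        have h1 : ∀ a, (∑ b, mAC p (a, c) * mBC p (b, c) / mC p c)
            = mAC p (a, c) := by
          intro a
          rw [← Finset.sum_div, ← Finset.mul_sum, hBfib c, mul_div_assoc,
            div_self (hmC c).ne', mul_one]
        simp_rw [h1]
        rfl
    _ = 1 := by rw [sum_mC, hsum]

end AuxMES

/-- The Maximum Entropy Star redundancy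
`I_cap^MES(X₁,X₂;Y) = I_Q(X₁;X₂;Y)`, where `Q = Qstar p` is the maximum entropy
distribution matching the pairwise marginals, satisfies Additivity: for two independent
subsystems the maximum entropy distribution of the combined system factorizes, and
consequently the redundancy of the combined system is the sum of the redundancies. -/
theorem MES_additivity
    {A B C A' B' C' : Type} [Fintype A] [Fintype B] [Fintype C]
    [Fintype A'] [Fintype B'] [Fintype C']
    (p : A × B × C → ℝ) (hpos : ∀ x, 0 < p x) (hsum : ∑ x, p x = 1)
    (p' : A' × B' × C' → ℝ) (hpos' : ∀ x, 0 < p' x) (hsum' : ∑ x, p' x = 1) :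
    -- the maximum entropy distribution of the combined system factorizes
    (∀ x : (A × A') × (B × B') × (C × C'),
      Qstar (prodSys p p') x =
        Qstar p (x.1.1, x.2.1.1, x.2.2.1) * Qstar p' (x.1.2, x.2.1.2, x.2.2.2)) ∧
    -- and consequently the MES redundancy is additive
    coI (Qstar (prodSys p p')) = coI (Qstar p) + coI (Qstar p') := by
  obtain ⟨⟨a0, b0, c0⟩⟩ : Nonempty (A × B × C) := by
    by_contra h
    rw [not_nonempty_iff] at h
    rw [Finset.univ_eq_empty, Finset.sum_empty] at hsum
    exact one_ne_zero hsum.symm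
  obtain ⟨⟨a0', b0', c0'⟩⟩ : Nonempty (A' × B' × C') := by
    by_contra h
    rw [not_nonempty_iff] at h
    rw [Finset.univ_eq_empty, Finset.sum_empty] at hsum'
    exact one_ne_zero hsum'.symm
  haveI : Nonempty A := ⟨a0⟩
  haveI : Nonempty B := ⟨b0⟩
  haveI : Nonempty A' := ⟨a0'⟩
  haveI : Nonempty B' := ⟨b0'⟩
  have hmC := mC_pos p hpos
  have hmC' := mC_pos p' hpos'
  have hfac : ∀ x : (A × A') × (B × B') × (C × C'),
      Qstar (prodSys p p') x =
        Qstar p (x.1.1, x.2.1.1, x.2.2.1) * Qstar p' (x.1.2, x.2.1.2, x.2.2.2) := by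
    intro x
    unfold Qstar
    rw [mAC_prod, mBC_prod, mC_prod]
    dsimp only
    rw [div_mul_div_comm]
    congr 1
    ring
  refine ⟨hfac, ?_⟩
  have hfac' : Qstar (prodSys p p') = prodSys (Qstar p) (Qstar p') := funext fun x => hfac x
  rw [hfac']
  exact coI_prod _ _ (Qstar_nonneg p hpos) (Qstar_nonneg p' hpos')
    (sum_Qstar p hpos hsum) (sum_Qstar p' hpos' hsum')
end

section
/- For the Rescaled Redundancy, both PID atoms of the bivariate lattice are nonnegative: the unique information atoms I(X_i; Y) − I_RR(X_1,X_2;Y) ≥ 0 and the synergy atom I(X_1,X_2;Y) − I(X_1;Y) − I(X_2;Y) + I_RR(X_1,X_2;Y) ≥ 0. -/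
/-- A (finite, discrete) random variable on the finite sample space `Ω`,
with values encoded as natural numbers. -/
abbrev RV (Ω : Type) := Ω → ℕ

/-- `p` is a probability mass function on `Ω`. -/
def IsPMF {Ω : Type} [Fintype Ω] (p : Ω → ℝ) : Prop :=
  (∀ ω, 0 ≤ p ω) ∧ ∑ ω, p ω = 1

/-- Probability that the random variable `X` takes the value `v`. -/
noncomputable def prob {Ω α : Type} [Fintype Ω] [DecidableEq α]
    (p : Ω → ℝ) (X : Ω → α) (v : α) : ℝ :=
  ∑ ω ∈ Finset.univ.filter (fun ω => X ω = v), p ω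

/-- Shannon entropy of the random variable `X` under the distribution `p`. -/
noncomputable def ent {Ω α : Type} [Fintype Ω] [DecidableEq α]
    (p : Ω → ℝ) (X : Ω → α) : ℝ :=
  ∑ v ∈ Finset.image X Finset.univ, -(prob p X v * Real.log (prob p X v))

/-- Shannon mutual information `I(X;Y)` under the distribution `p`. -/
noncomputable def MI {Ω α β : Type} [Fintype Ω] [DecidableEq α] [DecidableEq β]
    (p : Ω → ℝ) (X : Ω → α) (Y : Ω → β) : ℝ :=
  ent p X + ent p Y - ent p (fun ω => (X ω, Y ω))

/-- The joint random variable `(X,Y)`, encoded back into `ℕ` via the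
injective pairing function `Nat.pair`. -/
def joint {Ω : Type} (X Y : RV Ω) : RV Ω := fun ω => Nat.pair (X ω) (Y ω)

section Aux

variable {Ω α β : Type} [Fintype Ω] [DecidableEq α] [DecidableEq β]

/-- Sums over the value space can be pulled back to sums over `Ω`. -/
lemma sum_fiber (p : Ω → ℝ) (X : Ω → α) (F : α → ℝ) :
    ∑ v ∈ Finset.image X Finset.univ, prob p X v * F v = ∑ ω, p ω * F (X ω) := by
  rw [← Finset.sum_fiberwise_of_maps_to
      (fun ω (_ : ω ∈ Finset.univ) => Finset.mem_image_of_mem X (Finset.mem_univ ω))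
      (fun ω => p ω * F (X ω))]
  refine Finset.sum_congr rfl fun v hv => ?_
  rw [prob, Finset.sum_mul]
  exact Finset.sum_congr rfl fun ω hω => by
    rw [(Finset.mem_filter.mp hω).2]

lemma prob_nonneg (p : Ω → ℝ) (hp : ∀ ω, 0 ≤ p ω) (X : Ω → α) (v : α) :
    0 ≤ prob p X v :=
  Finset.sum_nonneg fun ω _ => hp ω

lemma le_prob (p : Ω → ℝ) (hp : ∀ ω, 0 ≤ p ω) (X : Ω → α) (ω : Ω) :
    p ω ≤ prob p X (X ω) :=
  Finset.single_le_sum (fun ω' _ => hp ω')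
    (Finset.mem_filter.mpr ⟨Finset.mem_univ ω, rfl⟩)

lemma sum_prob (p : Ω → ℝ) (X : Ω → α) :
    ∑ v ∈ Finset.image X Finset.univ, prob p X v = ∑ ω, p ω := by
  have := sum_fiber p X (fun _ => 1)
  simpa using this

lemma ent_eq (p : Ω → ℝ) (X : Ω → α) :
    ent p X = -∑ ω, p ω * Real.log (prob p X (X ω)) := by
  rw [ent, ← sum_fiber p X (fun v => Real.log (prob p X v)), ← Finset.sum_neg_distrib]

/-- If fibers of `W` refine fibers of `X`, probabilities compare pointwise. -/
lemma prob_le_prob (p : Ω → ℝ) (hp : ∀ ω, 0 ≤ p ω) (X : Ω → α) (W : Ω → β)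
    (h : ∀ ω ω', W ω = W ω' → X ω = X ω') (ω : Ω) :
    prob p W (W ω) ≤ prob p X (X ω) := by
  apply Finset.sum_le_sum_of_subset_of_nonneg
  · intro ω' hω'
    have := (Finset.mem_filter.mp hω').2
    exact Finset.mem_filter.mpr ⟨Finset.mem_univ ω', h ω' ω this⟩
  · intro i _ _; exact hp i

/-- Entropy of a coarse-graining is smaller. -/
lemma ent_mono (p : Ω → ℝ) (hp : ∀ ω, 0 ≤ p ω) (X : Ω → α) (W : Ω → β)
    (h : ∀ ω ω', W ω = W ω' → X ω = X ω') :
    ent p X ≤ ent p W := by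
  rw [ent_eq, ent_eq, neg_le_neg_iff]
  apply Finset.sum_le_sum
  intro ω _
  rcases eq_or_lt_of_le (hp ω) with h0 | h0
  · rw [← h0]; simp
  · refine mul_le_mul_of_nonneg_left ?_ (hp ω)
    exact Real.log_le_log (lt_of_lt_of_le h0 (le_prob p hp W ω))
      (prob_le_prob p hp X W h ω)

/-- Master Gibbs-type inequality. -/
lemma gibbs (p f g : Ω → ℝ) (hp : ∀ ω, 0 ≤ p ω)
    (hfg : ∀ ω, 0 < p ω → 0 < f ω ∧ 0 < g ω)
    (hsum : ∑ ω, p ω * (f ω / g ω) ≤ ∑ ω, p ω) :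
    ∑ ω, p ω * Real.log (f ω) ≤ ∑ ω, p ω * Real.log (g ω) := by
  have key : ∀ ω, p ω * Real.log (f ω) - p ω * Real.log (g ω)
      ≤ p ω * (f ω / g ω) - p ω := by
    intro ω
    rcases eq_or_lt_of_le (hp ω) with h0 | h0
    · rw [← h0]; simp
    · obtain ⟨hf, hg⟩ := hfg ω h0
      have hlog : Real.log (f ω) - Real.log (g ω) ≤ f ω / g ω - 1 := by
        rw [← Real.log_div hf.ne' hg.ne']
        exact Real.log_le_sub_one_of_pos (div_pos hf hg)
      nlinarith [mul_le_mul_of_nonneg_left hlog (hp ω)]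
  have := Finset.sum_le_sum (fun ω (_ : ω ∈ Finset.univ) => key ω)
  rw [Finset.sum_sub_distrib, Finset.sum_sub_distrib] at this
  linarith

/-- Marginalization: summing the joint over the second coordinate. -/
lemma marg (p : Ω → ℝ) (X : Ω → α) (Y : Ω → β) (x : α) :
    ∑ y ∈ Finset.image Y Finset.univ, prob p (fun ω => (X ω, Y ω)) (x, y)
      = prob p X x := by
  rw [prob, ← Finset.sum_fiberwise_of_maps_to
      (fun ω (_ : ω ∈ Finset.univ.filter (fun ω => X ω = x)) =>
        Finset.mem_image_of_mem Y (Finset.mem_univ ω)) p]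
  refine Finset.sum_congr rfl fun y _ => ?_
  rw [prob]
  congr 1
  ext ω
  simp only [Finset.mem_filter, Finset.mem_univ, true_and, Finset.filter_filter,
    Prod.mk.injEq]

lemma cancel1 (a b : ℝ) (ha : 0 ≤ a) (hb : 0 ≤ b) : a * (b / a) ≤ b := by
  rcases eq_or_lt_of_le ha with h | h
  · simp [← h, hb]
  · rw [mul_div_cancel₀ _ h.ne']

lemma cancel2 (a b c : ℝ) (ha : 0 ≤ a) (hb : 0 ≤ b) (hc : 0 ≤ c) :
    a * (b / (c * a)) ≤ b / c := by
  rcases eq_or_lt_of_le ha with h | h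
  · simp [← h]; positivity
  · rw [show c * a = c * a by ring, ← div_div, mul_comm, div_mul_cancel₀ _ h.ne']

lemma cancel3 (a b : ℝ) (ha : 0 ≤ a) : a / b * b ≤ a := by
  rcases eq_or_ne b 0 with h | h
  · simp [h, ha]
  · rw [div_mul_cancel₀ _ h]

lemma sum_mul_log_mul (p f g : Ω → ℝ) (hp : ∀ ω, 0 ≤ p ω)
    (h : ∀ ω, 0 < p ω → 0 < f ω ∧ 0 < g ω) :
    ∑ ω, p ω * Real.log (f ω * g ω)
      = ∑ ω, p ω * Real.log (f ω) + ∑ ω, p ω * Real.log (g ω) := by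
  rw [← Finset.sum_add_distrib]
  refine Finset.sum_congr rfl fun ω _ => ?_
  rcases eq_or_lt_of_le (hp ω) with h0 | h0
  · rw [← h0]; ring
  · rw [Real.log_mul (h ω h0).1.ne' (h ω h0).2.ne']; ring

lemma MI_nonneg (p : Ω → ℝ) (hp : IsPMF p) (X : Ω → α) (Y : Ω → β) :
    0 ≤ MI p X Y := by
  obtain ⟨hp0, hp1⟩ := hp
  set Z : Ω → α × β := fun ω => (X ω, Y ω) with hZ
  have hkey : ∑ ω, p ω * Real.log (prob p X (X ω) * prob p Y (Y ω))
      ≤ ∑ ω, p ω * Real.log (prob p Z (Z ω)) := by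
    apply gibbs p _ _ hp0
    · intro ω h0
      exact ⟨mul_pos (lt_of_lt_of_le h0 (le_prob p hp0 X ω))
          (lt_of_lt_of_le h0 (le_prob p hp0 Y ω)),
        lt_of_lt_of_le h0 (le_prob p hp0 Z ω)⟩
    · have hfac : ∀ ω, p ω * (prob p X (X ω) * prob p Y (Y ω) / prob p Z (Z ω))
          = p ω * ((fun z : α × β => prob p X z.1 * prob p Y z.2 / prob p Z z) (Z ω)) := by
        intro ω; rfl
      calc ∑ ω, p ω * (prob p X (X ω) * prob p Y (Y ω) / prob p Z (Z ω))
          = ∑ z ∈ Finset.image Z Finset.univ,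
              prob p Z z * (prob p X z.1 * prob p Y z.2 / prob p Z z) := by
            rw [sum_fiber p Z (fun z => prob p X z.1 * prob p Y z.2 / prob p Z z)]
        _ ≤ ∑ z ∈ Finset.image Z Finset.univ, prob p X z.1 * prob p Y z.2 := by
            refine Finset.sum_le_sum fun z _ => cancel1 _ _ (prob_nonneg p hp0 Z z)
              (mul_nonneg (prob_nonneg p hp0 X z.1) (prob_nonneg p hp0 Y z.2))
        _ ≤ ∑ z ∈ (Finset.image X Finset.univ) ×ˢ (Finset.image Y Finset.univ),
              prob p X z.1 * prob p Y z.2 := by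
            refine Finset.sum_le_sum_of_subset_of_nonneg ?_
              (fun z _ _ => mul_nonneg (prob_nonneg p hp0 X z.1) (prob_nonneg p hp0 Y z.2))
            intro z hz
            obtain ⟨ω, -, rfl⟩ := Finset.mem_image.mp hz
            exact Finset.mem_product.mpr ⟨Finset.mem_image_of_mem X (Finset.mem_univ ω),
              Finset.mem_image_of_mem Y (Finset.mem_univ ω)⟩
        _ = (∑ x ∈ Finset.image X Finset.univ, prob p X x)
              * (∑ y ∈ Finset.image Y Finset.univ, prob p Y y) := by
            rw [Finset.sum_product, Finset.sum_mul_sum]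
        _ ≤ ∑ ω, p ω := by rw [sum_prob, sum_prob, hp1]; norm_num
  rw [sum_mul_log_mul p _ _ hp0 (fun ω h0 =>
      ⟨lt_of_lt_of_le h0 (le_prob p hp0 X ω), lt_of_lt_of_le h0 (le_prob p hp0 Y ω)⟩)] at hkey
  rw [MI, ent_eq p X, ent_eq p Y, ent_eq p Z]
  linarith

/-- Deterministic data-processing inequality: coarse-graining a source
cannot increase mutual information. -/
lemma MI_comp_le {γ : Type} [DecidableEq γ] (p : Ω → ℝ) (hp : IsPMF p)
    (W : Ω → α) (Y : Ω → β) (r : α → γ) :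
    MI p (fun ω => r (W ω)) Y ≤ MI p W Y := by
  obtain ⟨hp0, hp1⟩ := hp
  set X : Ω → γ := fun ω => r (W ω) with hX
  set Z : Ω → α × β := fun ω => (W ω, Y ω) with hZ
  set XY : Ω → γ × β := fun ω => (X ω, Y ω) with hXY
  have pos : ∀ (δ : Type) [DecidableEq δ] (V : Ω → δ) (ω : Ω), 0 < p ω → 0 < prob p V (V ω) :=
    fun δ _ V ω h0 => lt_of_lt_of_le h0 (le_prob p hp0 V ω)
  have hkey : ∑ ω, p ω * Real.log (prob p W (W ω) * prob p XY (XY ω))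
      ≤ ∑ ω, p ω * Real.log (prob p X (X ω) * prob p Z (Z ω)) := by
    apply gibbs p _ _ hp0
    · intro ω h0
      exact ⟨mul_pos (pos _ W ω h0) (pos _ XY ω h0),
        mul_pos (pos _ X ω h0) (pos _ Z ω h0)⟩
    · calc ∑ ω, p ω * (prob p W (W ω) * prob p XY (XY ω)
              / (prob p X (X ω) * prob p Z (Z ω)))
          = ∑ z ∈ Finset.image Z Finset.univ, prob p Z z *
              (prob p W z.1 * prob p XY (r z.1, z.2)
                / (prob p X (r z.1) * prob p Z z)) := by
            rw [sum_fiber p Z (fun z => prob p W z.1 * prob p XY (r z.1, z.2)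
                / (prob p X (r z.1) * prob p Z z))]
        _ ≤ ∑ z ∈ Finset.image Z Finset.univ,
              prob p W z.1 * prob p XY (r z.1, z.2) / prob p X (r z.1) := by
            refine Finset.sum_le_sum fun z _ => cancel2 _ _ _ (prob_nonneg p hp0 Z z)
              (mul_nonneg (prob_nonneg p hp0 W z.1) (prob_nonneg p hp0 XY _))
              (prob_nonneg p hp0 X _)
        _ ≤ ∑ z ∈ (Finset.image W Finset.univ) ×ˢ (Finset.image Y Finset.univ),
              prob p W z.1 * prob p XY (r z.1, z.2) / prob p X (r z.1) := by
            refine Finset.sum_le_sum_of_subset_of_nonneg ?_ (fun z _ _ =>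
              div_nonneg (mul_nonneg (prob_nonneg p hp0 W z.1) (prob_nonneg p hp0 XY _))
                (prob_nonneg p hp0 X _))
            intro z hz
            obtain ⟨ω, -, rfl⟩ := Finset.mem_image.mp hz
            exact Finset.mem_product.mpr ⟨Finset.mem_image_of_mem W (Finset.mem_univ ω),
              Finset.mem_image_of_mem Y (Finset.mem_univ ω)⟩
        _ = ∑ w ∈ Finset.image W Finset.univ, prob p W w / prob p X (r w) *
              ∑ y ∈ Finset.image Y Finset.univ, prob p XY (r w, y) := by
            rw [Finset.sum_product]
            refine Finset.sum_congr rfl fun w _ => ?_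
            rw [Finset.mul_sum]
            exact Finset.sum_congr rfl fun y _ => by rw [mul_div_right_comm]
        _ ≤ ∑ w ∈ Finset.image W Finset.univ, prob p W w := by
            refine Finset.sum_le_sum fun w _ => ?_
            rw [marg p X Y (r w)]
            exact cancel3 _ _ (prob_nonneg p hp0 W w)
        _ ≤ ∑ ω, p ω := by rw [sum_prob]
  rw [sum_mul_log_mul p _ _ hp0 (fun ω h0 => ⟨pos _ W ω h0, pos _ XY ω h0⟩),
    sum_mul_log_mul p _ _ hp0 (fun ω h0 => ⟨pos _ X ω h0, pos _ Z ω h0⟩)] at hkey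
  rw [MI, MI, ent_eq p X, ent_eq p W, ent_eq p Z, ent_eq p XY]
  linarith

end Aux

/-- Coinformation `I(X₁;X₂;Y) = I(X₁;Y) + I(X₂;Y) − I(X₁,X₂;Y)`. -/
noncomputable def coi {Ω : Type} [Fintype Ω] (p : Ω → ℝ) (X₁ X₂ Y : RV Ω) : ℝ :=
  MI p X₁ Y + MI p X₂ Y - MI p (joint X₁ X₂) Y

/-- `R_min = max(0, I(X₁;X₂;Y))`. -/
noncomputable def Rmin {Ω : Type} [Fintype Ω] (p : Ω → ℝ) (X₁ X₂ Y : RV Ω) : ℝ :=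
  max 0 (coi p X₁ X₂ Y)

/-- `R_MMI = min(I(X₁;Y), I(X₂;Y))`. -/
noncomputable def RMMI {Ω : Type} [Fintype Ω] (p : Ω → ℝ) (X₁ X₂ Y : RV Ω) : ℝ :=
  min (MI p X₁ Y) (MI p X₂ Y)

/-- Normalised source dependency `I_s = I(X₁;X₂) / min(H(X₁),H(X₂))`. -/
noncomputable def Isrc {Ω : Type} [Fintype Ω] (p : Ω → ℝ) (X₁ X₂ : RV Ω) : ℝ :=
  MI p X₁ X₂ / min (ent p X₁) (ent p X₂)

/-- The Rescaled Redundancy `I_RR = R_min + I_s (R_MMI − R_min)`. -/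
noncomputable def IRR {Ω : Type} [Fintype Ω] (p : Ω → ℝ) (X₁ X₂ Y : RV Ω) : ℝ :=
  Rmin p X₁ X₂ Y + Isrc p X₁ X₂ * (RMMI p X₁ X₂ Y - Rmin p X₁ X₂ Y)

/-- For the Rescaled Redundancy, all PID atoms of the bivariate lattice
are nonnegative: the unique information atoms `I(Xᵢ;Y) − I_RR ≥ 0` and the synergy atom
`I(X₁,X₂;Y) − I(X₁;Y) − I(X₂;Y) + I_RR ≥ 0`. -/
theorem rescaled_redundancy_local_positivity
    {Ω : Type} [Fintype Ω] (p : Ω → ℝ) (hp : IsPMF p)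
    (X₁ X₂ Y : RV Ω) (h₁ : 0 < ent p X₁) (h₂ : 0 < ent p X₂) :
    0 ≤ MI p X₁ Y - IRR p X₁ X₂ Y ∧
    0 ≤ MI p X₂ Y - IRR p X₁ X₂ Y ∧
    0 ≤ MI p (joint X₁ X₂) Y - MI p X₁ Y - MI p X₂ Y + IRR p X₁ X₂ Y := by
  obtain ⟨hp0, hp1⟩ := hp
  -- mutual informations are nonnegative
  have hm1 : 0 ≤ MI p X₁ Y := MI_nonneg p ⟨hp0, hp1⟩ X₁ Y
  have hm2 : 0 ≤ MI p X₂ Y := MI_nonneg p ⟨hp0, hp1⟩ X₂ Y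
  have hm12 : 0 ≤ MI p X₁ X₂ := MI_nonneg p ⟨hp0, hp1⟩ X₁ X₂
  -- data processing: each source says less than the joint
  have hd1 : MI p X₁ Y ≤ MI p (joint X₁ X₂) Y := by
    have e : X₁ = fun ω => (Nat.unpair (joint X₁ X₂ ω)).1 := funext fun ω => by simp [joint]
    conv_lhs => rw [e]
    exact MI_comp_le p ⟨hp0, hp1⟩ (joint X₁ X₂) Y (fun n => (Nat.unpair n).1)
  have hd2 : MI p X₂ Y ≤ MI p (joint X₁ X₂) Y := by
    have e : X₂ = fun ω => (Nat.unpair (joint X₁ X₂ ω)).2 := funext fun ω => by simp [joint]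
    conv_lhs => rw [e]
    exact MI_comp_le p ⟨hp0, hp1⟩ (joint X₁ X₂) Y (fun n => (Nat.unpair n).2)
  -- MI between sources is at most either entropy
  have he1 : ent p X₁ ≤ ent p (fun ω => (X₁ ω, X₂ ω)) :=
    ent_mono p hp0 X₁ _ (fun ω ω' h => congrArg Prod.fst h)
  have he2 : ent p X₂ ≤ ent p (fun ω => (X₁ ω, X₂ ω)) :=
    ent_mono p hp0 X₂ _ (fun ω ω' h => congrArg Prod.snd h)
  have hMIent : MI p X₁ X₂ ≤ min (ent p X₁) (ent p X₂) := by
    rw [MI]; exact le_min (by linarith) (by linarith)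
  -- the normalized source dependency is in [0,1]
  have hmin : 0 < min (ent p X₁) (ent p X₂) := lt_min h₁ h₂
  have hs0 : 0 ≤ Isrc p X₁ X₂ := div_nonneg hm12 hmin.le
  have hs1 : Isrc p X₁ X₂ ≤ 1 := (div_le_one hmin).mpr hMIent
  -- lattice facts
  have hco : coi p X₁ X₂ Y = MI p X₁ Y + MI p X₂ Y - MI p (joint X₁ X₂) Y := rfl
  have hRmin_le : Rmin p X₁ X₂ Y ≤ RMMI p X₁ X₂ Y := by
    apply max_le (le_min hm1 hm2) (le_min (by rw [hco]; linarith) (by rw [hco]; linarith))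
  have hRc : coi p X₁ X₂ Y ≤ Rmin p X₁ X₂ Y := le_max_right _ _
  have hR1 : RMMI p X₁ X₂ Y ≤ MI p X₁ Y := min_le_left _ _
  have hR2 : RMMI p X₁ X₂ Y ≤ MI p X₂ Y := min_le_right _ _
  have hIRR : IRR p X₁ X₂ Y = Rmin p X₁ X₂ Y
      + Isrc p X₁ X₂ * (RMMI p X₁ X₂ Y - Rmin p X₁ X₂ Y) := rfl
  have hge : Rmin p X₁ X₂ Y ≤ IRR p X₁ X₂ Y := by
    rw [hIRR]; nlinarith
  have hle : IRR p X₁ X₂ Y ≤ RMMI p X₁ X₂ Y := by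
    rw [hIRR]; nlinarith
  refine ⟨by linarith, by linarith, by rw [hco] at hRc; linarith⟩
end
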